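/- For the Kundt metric with ∂W_i/∂v = 0 identically for all i = 2,…,n−1 (the Kundt–RNV, or Walker, form), the null one-form ℓ♭ (components ℓ_u = 1, others zero) is recurrent: ∇_a ℓ_b = λ_a ℓ_b for all a,b, where λ is the one-form with components λ_u = ∂H/∂v and all other components zero; equivalently ∇_a ℓ_b = (∂H/∂v) ℓ_a ℓ_b. -/

import Mathlib

open Matrix

/-- Points of the Kundt spacetime `ℝⁿ` with `n = m + 2`, written as coordinates
`(v, u, x)` with transverse coordinates `x = (x²,…,x^{n-1}) ∈ ℝ^m`. -/
abbrev KPt (m : ℕ) := ℝ × ℝ × (Fin m → ℝ)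

/-- Coordinate indices for the Kundt metric: `Sum.inl 0` is the `v`-index, `Sum.inl 1` is the
`u`-index, and `Sum.inr k` are the transverse indices. -/
abbrev KIdx (m : ℕ) := Fin 2 ⊕ Fin m

/-- The Kundt metric `ds² = 2du(dv + H du + W_i dx^i) + g_ij dx^i dx^j`, as a symmetric
matrix-valued function on `ℝⁿ`: components `g_vv = 0`, `g_vu = g_uv = 1`, `g_vi = 0`,
`g_uu = 2H`, `g_ui = W_i`, and transverse block `g_ij(u,x)`. -/
noncomputable def kundt {m : ℕ} (H : KPt m → ℝ) (W : Fin m → KPt m → ℝ)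
    (gT : ℝ → (Fin m → ℝ) → Matrix (Fin m) (Fin m) ℝ) (p : KPt m) :
    Matrix (KIdx m) (KIdx m) ℝ :=
  Matrix.of fun a b =>
    match a, b with
    | Sum.inl i, Sum.inl j =>
        if i = 0 then (if j = 0 then 0 else 1)
        else (if j = 0 then 1 else 2 * H p)
    | Sum.inl i, Sum.inr _k => if i = 0 then 0 else W _k p
    | Sum.inr _k, Sum.inl i => if i = 0 then 0 else W _k p
    | Sum.inr k, Sum.inr l => gT p.2.1 p.2.2 k l

/-- The Minkowski matrix `diag(-1,1,…,1)` on the Kundt index set. -/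
noncomputable def kMink (m : ℕ) : Matrix (KIdx m) (KIdx m) ℝ :=
  Matrix.diagonal (fun a => if a = Sum.inl 0 then (-1 : ℝ) else 1)

/-- The coordinate basis vectors of `ℝⁿ = ℝ × ℝ × ℝ^м`: `∂/∂v`, `∂/∂u` and `∂/∂x^k`. -/
noncomputable def kBasis {m : ℕ} : KIdx m → KPt m
  | Sum.inl i => if i = 0 then ((1 : ℝ), (0 : ℝ), (0 : Fin m → ℝ)) else (0, 1, 0)
  | Sum.inr k => (0, 0, Pi.single k 1)

/-- The coordinate partial derivative `∂_a f` of a scalar function on `ℝⁿ`. -/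
noncomputable def kPDeriv {m : ℕ} (a : KIdx m) (f : KPt m → ℝ) (p : KPt m) : ℝ :=
  fderiv ℝ f p (kBasis a)

/-- The Levi-Civita connection coefficients
`Γ^d_ab = (1/2) g^{dc} (∂_a g_cb + ∂_b g_ca - ∂_c g_ab)` of the Kundt metric. -/
noncomputable def kChristoffel {m : ℕ} (H : KPt m → ℝ) (W : Fin m → KPt m → ℝ)
    (gT : ℝ → (Fin m → ℝ) → Matrix (Fin m) (Fin m) ℝ) (d a b : KIdx m) (p : KPt m) : ℝ :=
  (1 / 2) * ∑ c : KIdx m, (kundt H W gT p)⁻¹ d c *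
    (kPDeriv a (fun q => kundt H W gT q c b) p + kPDeriv b (fun q => kundt H W gT q c a) p
      - kPDeriv c (fun q => kundt H W gT q a b) p)

/-- The one-form `ℓ♭` with components `ℓ_a = g_av`, i.e. `ℓ_u = 1` and all other components
zero. -/
noncomputable def lFlat {m : ℕ} : KIdx m → ℝ := fun a => if a = Sum.inl 1 then 1 else 0

/-- The covariant derivative `∇_a ℓ_b = ∂_a ℓ_b - Γ^c_ab ℓ_c` of the constant one-form `ℓ♭`
with respect to the Levi-Civita connection of the Kundt metric. -/
noncomputable def kCovDl {m : ℕ} (H : KPt m → ℝ) (W : Fin m → KPt m → ℝ)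
    (gT : ℝ → (Fin m → ℝ) → Matrix (Fin m) (Fin m) ℝ) (a b : KIdx m) (p : KPt m) : ℝ :=
  kPDeriv a (fun _ => lFlat b) p - ∑ c : KIdx m, kChristoffel H W gT c a b p * lFlat c

/-- The null coordinate vector field `ℓ = ∂/∂v`, as a vector of components. -/
noncomputable def lVec {m : ℕ} : KIdx m → ℝ := fun a => if a = Sum.inl 0 then 1 else 0


lemma kPDeriv_const {m : ℕ} (a : KIdx m) (c : ℝ) (p : KPt m) :
    kPDeriv a (fun _ => c) p = 0 := by
  simp [kPDeriv]

lemma kPDeriv_const_mul {m : ℕ} (a : KIdx m) (c : ℝ) (f : KPt m → ℝ) (p : KPt m)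
    (hf : DifferentiableAt ℝ f p) :
    kPDeriv a (fun q => c * f q) p = c * kPDeriv a f p := by
  simp [kPDeriv, fderiv_const_mul hf]

lemma kPDeriv_v_snd {m : ℕ} (g : ℝ × (Fin m → ℝ) → ℝ)
    (hg : Differentiable ℝ g) (p : KPt m) :
    kPDeriv (Sum.inl 0) (fun q : KPt m => g q.2) p = 0 := by
  have hc : HasFDerivAt (fun q : KPt m => g q.2)
      ((fderiv ℝ g p.2).comp (ContinuousLinearMap.snd ℝ ℝ (ℝ × (Fin m → ℝ)))) p :=
    ((hg p.2).hasFDerivAt).comp p (hasFDerivAt_snd)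
  rw [kPDeriv, hc.fderiv]
  simp [kBasis]; exact (fderiv ℝ g p.2).map_zero

/-- The explicit inverse of the Kundt metric. -/
noncomputable def kInvB {m : ℕ} (Hp : ℝ) (Wp : Fin m → ℝ)
    (G : Matrix (Fin m) (Fin m) ℝ) : Matrix (KIdx m) (KIdx m) ℝ :=
  Matrix.of fun a b =>
    match a, b with
    | Sum.inl i, Sum.inl j =>
        if i = 0 then (if j = 0 then -(2 * Hp) + ∑ k, ∑ l, Wp k * G⁻¹ k l * Wp l else 1)
        else (if j = 0 then 1 else 0)
    | Sum.inl i, Sum.inr l => if i = 0 then -∑ k, G⁻¹ l k * Wp k else 0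
    | Sum.inr k, Sum.inl j => if j = 0 then -∑ l, G⁻¹ k l * Wp l else 0
    | Sum.inr k, Sum.inr l => G⁻¹ k l

lemma kundt_mul_kInvB {m : ℕ} (H : KPt m → ℝ) (W : Fin m → KPt m → ℝ)
    (gT : ℝ → (Fin m → ℝ) → Matrix (Fin m) (Fin m) ℝ) (p : KPt m)
    (hsym : (gT p.2.1 p.2.2).IsSymm) (hdet : IsUnit (gT p.2.1 p.2.2).det) :
    kundt H W gT p * kInvB (H p) (fun k => W k p) (gT p.2.1 p.2.2) = 1 := by
  set G := gT p.2.1 p.2.2 with hG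
  have hGi : G * G⁻¹ = 1 := Matrix.mul_nonsing_inv G hdet
  have hsymi : (G⁻¹)ᵀ = G⁻¹ := by
    rw [Matrix.transpose_nonsing_inv, hsym.eq]
  have hsymi' : ∀ k l, G⁻¹ k l = G⁻¹ l k := fun k l =>
    (congrFun (congrFun hsymi l) k : G⁻¹ᵀ l k = G⁻¹ l k)
  ext a b
  rcases a with i | k <;> rcases b with j | l
  · fin_cases i <;> fin_cases j <;>
      simp [Matrix.mul_apply, Fintype.sum_sum_type, Fin.sum_univ_two, kundt, kInvB,
        Matrix.one_apply, Finset.mul_sum, Finset.sum_mul] <;> ring_nf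
  all_goals (try (fin_cases j)) ; all_goals (try (fin_cases i))
  all_goals simp [Matrix.mul_apply, Fintype.sum_sum_type, Fin.sum_univ_two, kundt, kInvB,
    Matrix.one_apply, Finset.mul_sum, Finset.sum_mul]
  · have h : (∑ x : Fin m, W x p * G⁻¹ x l) = ∑ x : Fin m, G⁻¹ l x * W x p :=
      Finset.sum_congr rfl fun x _ => by rw [mul_comm, hsymi' x l]
    rw [h]; ring
  · have h : (∑ x : Fin m, ∑ i : Fin m, gT p.2.1 p.2.2 k x * (G⁻¹ x i * W i p))
        = ∑ i : Fin m, (G * G⁻¹) k i * W i p := by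
      rw [Finset.sum_comm]
      refine Finset.sum_congr rfl fun i _ => ?_
      rw [Matrix.mul_apply, Finset.sum_mul, ← hG]
      exact Finset.sum_congr rfl fun x _ => by ring
    rw [h, hGi]
    simp [Matrix.one_apply]
  · have h := congrFun (congrFun hGi k) l
    simpa [Matrix.mul_apply, Matrix.one_apply, hG] using h


/-- For the Kundt metric with `∂W_i/∂v = 0` (the Kundt–RNV, or Walker, form), the null
one-form `ℓ♭` is recurrent: `∇_a ℓ_b = λ_a ℓ_b` where `λ` is the one-form with `λ_u = ∂H/∂v`
and all other components zero; equivalently `∇_a ℓ_b = (∂H/∂v) ℓ_a ℓ_b`. -/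
theorem kundt_rnv_recurrent {m : ℕ} (hm : 2 ≤ m)
    (H : KPt m → ℝ) (W : Fin m → KPt m → ℝ)
    (gT : ℝ → (Fin m → ℝ) → Matrix (Fin m) (Fin m) ℝ)
    (hH : ContDiff ℝ (⊤ : ℕ∞) H) (hW : ∀ k, ContDiff ℝ (⊤ : ℕ∞) (W k))
    (hgT : ∀ k l, ContDiff ℝ (⊤ : ℕ∞) (fun q : ℝ × (Fin m → ℝ) => gT q.1 q.2 k l))
    (hsym : ∀ u x, (gT u x).IsSymm) (hpos : ∀ u x, (gT u x).PosDef)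
    (hWv : ∀ (k : Fin m) (p : KPt m), kPDeriv (Sum.inl 0) (W k) p = 0) :
    ∀ (p : KPt m) (a b : KIdx m),
      kCovDl H W gT a b p
          = (if a = Sum.inl 1 then kPDeriv (Sum.inl 0) H p else 0) * lFlat b ∧
      kCovDl H W gT a b p = kPDeriv (Sum.inl 0) H p * lFlat a * lFlat b  := by
  have hdet : ∀ p : KPt m, IsUnit (gT p.2.1 p.2.2).det := fun p =>
    isUnit_iff_ne_zero.mpr (ne_of_gt (hpos p.2.1 p.2.2).det_pos)
  intro p a b
  have hInv : (kundt H W gT p)⁻¹ = kInvB (H p) (fun k => W k p) (gT p.2.1 p.2.2) :=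
    Matrix.inv_eq_right_inv (kundt_mul_kInvB H W gT p (hsym _ _) (hdet p))
  have hrow : ∀ c : KIdx m, (kundt H W gT p)⁻¹ (Sum.inl 1) c
      = if c = Sum.inl 0 then (1:ℝ) else 0 := by
    intro c
    rw [hInv]
    rcases c with j | l
    · fin_cases j <;> simp [kInvB]
    · simp [kInvB]
  have hrowconst : ∀ b : KIdx m,
      (fun q => kundt H W gT q (Sum.inl 0) b) = fun _ => lFlat b := by
    intro b; funext q
    rcases b with j | l
    · fin_cases j <;> simp [kundt, lFlat]
    · simp [kundt, lFlat]
  have hdv : ∀ a b : KIdx m, kPDeriv (Sum.inl 0) (fun q => kundt H W gT q a b) p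
      = if a = Sum.inl 1 ∧ b = Sum.inl 1 then 2 * kPDeriv (Sum.inl 0) H p else 0 := by
    intro a b
    rcases a with i | k <;> rcases b with j | l
    · fin_cases i <;> fin_cases j <;> (beta_reduce; simp only [Fin.zero_eta, Fin.mk_one])
      · have h : (fun q => kundt H W gT q (Sum.inl 0) (Sum.inl 0)) = fun _ => (0:ℝ) :=
          funext fun q => by simp [kundt]
        rw [h, kPDeriv_const]; simp
      · have h : (fun q => kundt H W gT q (Sum.inl 0) (Sum.inl 1)) = fun _ => (1:ℝ) :=
          funext fun q => by simp [kundt]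
        rw [h, kPDeriv_const]; simp
      · have h : (fun q => kundt H W gT q (Sum.inl 1) (Sum.inl 0)) = fun _ => (1:ℝ) :=
          funext fun q => by simp [kundt]
        rw [h, kPDeriv_const]; simp
      · have h : (fun q => kundt H W gT q (Sum.inl 1) (Sum.inl 1)) = fun q => 2 * H q :=
          funext fun q => by simp [kundt]
        rw [h, kPDeriv_const_mul _ _ _ _ ((hH.differentiable (by simp)).differentiableAt)]
        simp
    · fin_cases i <;> (beta_reduce; simp only [Fin.zero_eta, Fin.mk_one])
      · have h : (fun q => kundt H W gT q (Sum.inl 0) (Sum.inr l)) = fun _ => (0:ℝ) :=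
          funext fun q => by simp [kundt]
        rw [h, kPDeriv_const]; simp
      · have h : (fun q => kundt H W gT q (Sum.inl 1) (Sum.inr l)) = W l :=
          funext fun q => by simp [kundt]
        rw [h, hWv l p]; simp
    · fin_cases j <;> (beta_reduce; simp only [Fin.zero_eta, Fin.mk_one])
      · have h : (fun q => kundt H W gT q (Sum.inr k) (Sum.inl 0)) = fun _ => (0:ℝ) :=
          funext fun q => by simp [kundt]
        rw [h, kPDeriv_const]; simp
      · have h : (fun q => kundt H W gT q (Sum.inr k) (Sum.inl 1)) = W k :=
          funext fun q => by simp [kundt]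
        rw [h, hWv k p]; simp
    · have h : (fun q => kundt H W gT q (Sum.inr k) (Sum.inr l))
          = fun q : KPt m => (fun r : ℝ × (Fin m → ℝ) => gT r.1 r.2 k l) q.2 :=
        funext fun q => by simp [kundt]
      rw [h, kPDeriv_v_snd _ ((hgT k l).differentiable (by simp))]
      simp
  have hchr : kChristoffel H W gT (Sum.inl 1) a b p
      = if a = Sum.inl 1 ∧ b = Sum.inl 1 then -kPDeriv (Sum.inl 0) H p else 0 := by
    rw [kChristoffel]
    simp only [hrow, ite_mul, one_mul, zero_mul, Finset.sum_ite_eq', Finset.mem_univ, if_true]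
    rw [hrowconst b, hrowconst a, kPDeriv_const, kPDeriv_const, hdv a b]
    by_cases h : a = Sum.inl 1 ∧ b = Sum.inl 1 <;> simp [h] <;> ring
  have hsum : ∑ c : KIdx m, kChristoffel H W gT c a b p * lFlat c
      = kChristoffel H W gT (Sum.inl 1) a b p := by
    simp [lFlat, mul_ite, mul_one, mul_zero, Finset.sum_ite_eq']
  have hcov : kCovDl H W gT a b p
      = if a = Sum.inl 1 ∧ b = Sum.inl 1 then kPDeriv (Sum.inl 0) H p else 0 := by
    rw [kCovDl, kPDeriv_const, hsum, hchr]
    by_cases h : a = Sum.inl 1 ∧ b = Sum.inl 1 <;> simp [h]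
  constructor <;> rw [hcov] <;>
    by_cases ha : a = Sum.inl 1 <;> by_cases hb : b = Sum.inl 1 <;>
      simp [ha, hb, lFlat]
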